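/- Let G be a Lie algebra over a field F and let f, g : G → G be linear maps satisfying f([a,b]) = [f(a),b] + [a,f(b)] - [a,g(b)] for all a,b ∈ G. Fix s ∈ G and define {a,b} := [a,b] + g(a) + f(b-a) + s. Then the affine Jacobi identity holds: {a,{b,c}} - {a,{a,a}} + {b,{c,a}} - {b,{b,b}} + {c,{a,b}} = {c,{c,c}} for all a,b,c ∈ G. -/
import Mathlib


/-- Affine Jacobi identity for the bracket `{a,b} = [a,b] + g(a) + f(b-a) + s`. -/
theorem stmt3 {F G : Type*} [Field F] [LieRing G] [LieAlgebra F G]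
    (f g : G →ₗ[F] G)
    (hfg : ∀ a b : G, f ⁅a, b⁆ = ⁅f a, b⁆ + ⁅a, f b⁆ - ⁅a, g b⁆)
    (s : G) (br : G → G → G)
    (hbr : ∀ a b : G, br a b = ⁅a, b⁆ + g a + f (b - a) + s) :
    ∀ a b c : G, br a (br b c) - br a (br a a) + br b (br c a) - br b (br b b) + br c (br a b) = br c (br c c) := by
  have hg0 : ∀ x : G, ⁅x, g x⁆ = (0:G) := by
    intro x
    have h := hfg x x
    rw [lie_self, map_zero, ← lie_skew (f x) x, neg_add_cancel, zero_sub] at h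
    exact neg_eq_zero.mp h.symm
  intro a b c
  have j := lie_jacobi a b c
  rw [add_assoc] at j
  have j' := eq_neg_of_add_eq_zero_left j
  simp only [hbr, map_add, map_sub, lie_add, lie_sub, add_lie, sub_lie, hfg, lie_self, hg0,
    lie_zero, zero_lie, map_zero, j']
  rw [← lie_skew (f b) c, ← lie_skew (f c) a, ← lie_skew (f a) b]
  abel
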